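/- Let G be a connected finite graph on n vertices and A a generalized Laplacian of G with eigenvalues λ_1 ≤ λ_2 ≤ … ≤ λ_n (listed with multiplicity). Suppose λ_k has multiplicity r, i.e. λ_{k−1} < λ_k = … = λ_{k+r−1} < λ_{k+r}. Then every eigenvector of A with eigenvalue λ_k has at most k + r − 1 sign graphs. -/

import Mathlib

open scoped Classical

/-- `A` is a generalized Laplacian of the graph `G`: a real symmetric matrix with
`A u v < 0` when `u` and `v` are adjacent and `A u v = 0` when `u ≠ v` are non-adjacent. -/
def IsGenLaplacian {V : Type*} [Fintype V] (G : SimpleGraph V) (A : Matrix V V ℝ) : Prop :=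
  A.IsSymm ∧ ∀ u v : V, u ≠ v →
    (G.Adj u v → A u v < 0) ∧ (¬ G.Adj u v → A u v = 0)

/-- The number of sign graphs of `f` on `G`: the number of connected components of the
subgraph induced on `{v | f v > 0}` plus the number of connected components of the subgraph
induced on `{v | f v < 0}`. -/
noncomputable def numSignGraphs {V : Type*} (G : SimpleGraph V) (f : V → ℝ) : ℕ :=
  Nat.card (G.induce {v | 0 < f v}).ConnectedComponent +
  Nat.card (G.induce {v | f v < 0}).ConnectedComponent

/-- `lam` is an eigenvalue of the matrix `A`. -/
def IsEigenvalue {V : Type*} [Fintype V] (A : Matrix V V ℝ) (lam : ℝ) : Prop :=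
  ∃ f : V → ℝ, f ≠ 0 ∧ A.mulVec f = lam • f

/-- The (geometric) multiplicity of `lam` as an eigenvalue of `A`. -/
noncomputable def eigMult {V : Type*} [Fintype V] (A : Matrix V V ℝ) (lam : ℝ) : ℕ :=
  Module.finrank ℝ
    ↥(LinearMap.ker (A.mulVecLin - lam • (LinearMap.id : (V → ℝ) →ₗ[ℝ] (V → ℝ))))

set_option linter.unusedSectionVars false
set_option maxHeartbeats 1000000

section Helpers

variable {V : Type*} [Fintype V]

/-- A real symmetric matrix is Hermitian. -/
lemma isSymm_isHermitian (A : Matrix V V ℝ) (hA : A.IsSymm) : A.IsHermitian := by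
  unfold Matrix.IsHermitian
  ext i j
  simpa [Matrix.conjTranspose_apply] using congrFun (congrFun hA i) j

/-- The geometric multiplicity of `t` equals the number of eigenvalues equal to `t`. -/
lemma eigMult_eq_card (A : Matrix V V ℝ) (hh : A.IsHermitian) (t : ℝ) :
    eigMult A t = (Finset.univ.filter fun v => hh.eigenvalues v = t).card := by
  classical
  have h1 : (A - t • (1 : Matrix V V ℝ)).mulVecLin
      = A.mulVecLin - t • (LinearMap.id : (V → ℝ) →ₗ[ℝ] (V → ℝ)) := by
    apply LinearMap.ext; intro x
    simp [Matrix.mulVecLin_apply, Matrix.sub_mulVec, Matrix.smul_mulVec, Matrix.one_mulVec]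
  have hU := hh.spectral_theorem
  set U : Matrix V V ℝ := (Matrix.IsHermitian.eigenvectorUnitary hh : Matrix V V ℝ) with hUdef
  have hUstar : U * star U = 1 :=
    (Matrix.mem_unitaryGroup_iff).mp (Matrix.IsHermitian.eigenvectorUnitary hh).2
  have hdecomp : A - t • 1 = U * Matrix.diagonal (fun v => hh.eigenvalues v - t) * star U := by
    have ht : (t • (1 : Matrix V V ℝ)) = U * (t • (1 : Matrix V V ℝ)) * star U := by
      rw [Matrix.mul_smul, Matrix.mul_one, Matrix.smul_mul, hUstar]
    rw [ht]; nth_rewrite 1 [hU]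
    rw [Unitary.conjStarAlgAut_apply, ← Matrix.sub_mul, ← Matrix.mul_sub]
    congr 2
    ext i j
    by_cases hij : i = j <;> simp [hij, Matrix.one_apply, Matrix.diagonal_apply]
  have hdetU : IsUnit U.det := Matrix.isUnit_det_of_right_inverse hUstar
  have hdetU' : IsUnit (star U).det := Matrix.isUnit_det_of_left_inverse (B := U) hUstar
  have hrank : (A - t • (1 : Matrix V V ℝ)).rank
      = Fintype.card {v // hh.eigenvalues v - t ≠ 0} := by
    rw [hdecomp, Matrix.rank_mul_eq_left_of_isUnit_det (star U) _ hdetU',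
      Matrix.rank_mul_eq_right_of_isUnit_det U _ hdetU, Matrix.rank_diagonal]
  have hrn := LinearMap.finrank_range_add_finrank_ker ((A - t • (1 : Matrix V V ℝ)).mulVecLin)
  rw [Module.finrank_fintype_fun_eq_card] at hrn
  have hrankdef : (A - t • (1 : Matrix V V ℝ)).rank
      = Module.finrank ℝ ↥(LinearMap.range (A - t • (1 : Matrix V V ℝ)).mulVecLin) := rfl
  have hcard : Fintype.card {v // hh.eigenvalues v - t ≠ 0}
      + (Finset.univ.filter fun v => hh.eigenvalues v = t).card = Fintype.card V := by
    rw [Fintype.card_subtype]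
    rw [← Finset.card_union_of_disjoint]
    · congr 1
      ext v
      simp only [Finset.mem_union, Finset.mem_filter, Finset.mem_univ, true_and, sub_ne_zero]
      tauto
    · simp only [Finset.disjoint_filter]
      intro v _ hv
      simp [sub_eq_zero] at hv ⊢
      exact hv
  have heq : eigMult A t
      = Module.finrank ℝ ↥(LinearMap.ker (A - t • (1 : Matrix V V ℝ)).mulVecLin) := by
    rw [eigMult, h1]
  omega

/-- orthonormal expansion of a double product sum. -/
lemma dot_expand {ι : Type*} [Fintype ι] (w : ι → V → ℝ)
    (horm : ∀ i j, (∑ u, w i u * w j u) = if i = j then (1:ℝ) else 0)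
    (p q : ι → ℝ) :
    (∑ u, (∑ i, p i * w i u) * (∑ j, q j * w j u)) = ∑ i, p i * q i := by
  have step : ∀ u : V, (∑ i, p i * w i u) * (∑ j, q j * w j u)
      = ∑ i, ∑ j, (p i * q j) * (w i u * w j u) := by
    intro u
    rw [Finset.sum_mul_sum]
    exact Finset.sum_congr rfl fun i _ => Finset.sum_congr rfl fun j _ => by ring
  simp_rw [step]
  rw [Finset.sum_comm]
  have h2 : ∀ i, (∑ u, ∑ j, (p i * q j) * (w i u * w j u)) = p i * q i := by
    intro i
    rw [Finset.sum_comm]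
    have h3 : ∀ j, (∑ u, (p i * q j) * (w i u * w j u))
        = (p i * q j) * ∑ u, w i u * w j u := by
      intro j; rw [Finset.mul_sum]
    simp_rw [h3, horm]
    simp
  simp_rw [h2]

/-- transfer of filter-counts between two enumerations with equal counts. -/

lemma count_filter_aux {ι : Type*} [Fintype ι] (a : ι → ℝ) (t : ℝ) :
    (Multiset.filter (fun x => t = a x) (Finset.univ.val : Multiset ι)).card
      = (Finset.univ.filter fun i => a i = t).card := by
  rw [Multiset.filter_congr (fun x _ => (eq_comm : (t = a x) ↔ _))]
  rfl

lemma filter_card_eq_of_count {ι κ : Type*} [Fintype ι] [Fintype κ] (a : ι → ℝ) (b : κ → ℝ)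
    (h : ∀ t, (Finset.univ.filter fun i => a i = t).card
      = (Finset.univ.filter fun j => b j = t).card)
    (p : ℝ → Prop) :
    (Finset.univ.filter fun i => p (a i)).card = (Finset.univ.filter fun j => p (b j)).card := by
  have hM : (Finset.univ.val : Multiset ι).map a = (Finset.univ.val : Multiset κ).map b := by
    apply Multiset.ext.mpr
    intro t
    rw [Multiset.count_map, Multiset.count_map, count_filter_aux, count_filter_aux, h t]
  have ha : (Finset.univ.filter fun i => p (a i)).card
      = (Multiset.filter p ((Finset.univ.val : Multiset ι).map a)).card := by
    rw [Multiset.filter_map, Multiset.card_map]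
    rfl
  have hb : (Finset.univ.filter fun j => p (b j)).card
      = (Multiset.filter p ((Finset.univ.val : Multiset κ).map b)).card := by
    rw [Multiset.filter_map, Multiset.card_map]
    rfl
  rw [hM] at ha
  exact ha.trans hb.symm

end Helpers

/-- discrete Courant nodal domain theorem. If `μ` lists the eigenvalues of a
generalized Laplacian `A` of a connected graph `G` in nondecreasing order with multiplicity,
and `λ_{k-1} < λ_k = ⋯ = λ_{k+r-1} < λ_{k+r}` (1-based positions), then any eigenvector of
`A` with eigenvalue `λ_k` has at most `k + r - 1` sign graphs. -/
theorem courant_nodal_domain_bound {V : Type*} [Fintype V] (G : SimpleGraph V)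
    (hG : G.Connected) (A : Matrix V V ℝ) (hA : IsGenLaplacian G A)
    (μ : Fin (Fintype.card V) → ℝ) (hmono : Monotone μ)
    (henum : ∀ t : ℝ, eigMult A t = (Finset.univ.filter fun i => μ i = t).card)
    (lam : ℝ) (k r : ℕ) (hk : 1 ≤ k) (hr : 1 ≤ r) (hkr : k + r - 1 ≤ Fintype.card V)
    (hpos : ∀ i : Fin (Fintype.card V),
      (i.val + 1 < k → μ i < lam) ∧
      (k ≤ i.val + 1 → i.val + 1 ≤ k + r - 1 → μ i = lam) ∧
      (k + r - 1 < i.val + 1 → lam < μ i))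
    (f : V → ℝ) (hf0 : f ≠ 0) (hf : A.mulVec f = lam • f) :
    numSignGraphs G f ≤ k + r - 1 := by
  classical
  by_contra hcon
  push_neg at hcon
  set K := k + r - 1 with hK
  have hh : A.IsHermitian := isSymm_isHermitian A hA.1
  set ev : V → ℝ := hh.eigenvalues with hev
  have hsym : ∀ u v : V, A v u = A u v := by
    intro u v
    have := congrFun (congrFun hA.1 u) v
    simpa [Matrix.transpose_apply] using this
  -- eigenvectors as plain functions
  set w : V → V → ℝ := fun i => ⇑(hh.eigenvectorBasis i) with hw
  have hAw : ∀ i, A.mulVec (w i) = ev i • w i := fun i => hh.mulVec_eigenvectorBasis i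
  have horm : ∀ i j, (∑ u, w i u * w j u) = if i = j then (1:ℝ) else 0 := by
    intro i j
    have := orthonormal_iff_ite.mp hh.eigenvectorBasis.orthonormal i j
    rw [PiLp.inner_apply] at this
    simp at this
    rw [← this]
    exact Finset.sum_congr rfl fun u _ => mul_comm _ _
  -- counting: #{v | ev v ≤ lam} = K
  have hcount : (Finset.univ.filter fun v : V => ev v ≤ lam).card = K := by
    have hc1 : ∀ t : ℝ, (Finset.univ.filter fun v : V => ev v = t).card
        = (Finset.univ.filter fun i : Fin (Fintype.card V) => μ i = t).card :=
      fun t => (eigMult_eq_card A hh t).symm.trans (henum t)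
    have htrans := filter_card_eq_of_count ev μ hc1 (fun x => x ≤ lam)
    have hiff : ∀ i : Fin (Fintype.card V), μ i ≤ lam ↔ (i : ℕ) < K := by
      intro i
      obtain ⟨h1, h2, h3⟩ := hpos i
      constructor
      · intro hle
        by_contra hnot
        have hK2 : K < (i : ℕ) + 1 := by omega
        exact absurd hle (not_le.mpr (h3 hK2))
      · intro hlt
        by_cases hik : (i : ℕ) + 1 < k
        · exact (h1 hik).le
        · exact (h2 (by omega) (by omega)).le
    have hμK : (Finset.univ.filter fun i : Fin (Fintype.card V) => μ i ≤ lam).card = K := by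
      rw [Finset.filter_congr (fun i _ => hiff i)]
      rw [show (Finset.univ.filter fun i : Fin (Fintype.card V) => (i : ℕ) < K)
          = Finset.image (Fin.castLE hkr) Finset.univ by
        ext i
        simp only [Finset.mem_filter, Finset.mem_image, Finset.mem_univ, true_and]
        constructor
        · intro hi; exact ⟨⟨i, hi⟩, rfl⟩
        · rintro ⟨j, rfl⟩; exact j.2]
      rw [Finset.card_image_of_injective _ (Fin.castLE_injective hkr), Finset.card_univ,
        Fintype.card_fin]
    exact htrans.trans hμK
  -- sign graph index type
  set P : Set V := {v | 0 < f v} with hP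
  set N : Set V := {v | f v < 0} with hN
  have hIfin : Finite ((G.induce P).ConnectedComponent ⊕ (G.induce N).ConnectedComponent) := by
    infer_instance
  letI : Fintype ((G.induce P).ConnectedComponent ⊕ (G.induce N).ConnectedComponent) :=
    Fintype.ofFinite _
  set I := (G.induce P).ConnectedComponent ⊕ (G.induce N).ConnectedComponent with hI
  have hcardI : Fintype.card I = numSignGraphs G f := by
    rw [numSignGraphs, ← Nat.card_eq_fintype_card, Nat.card_sum]
  -- the coefficient function
  set ρ : (I → ℝ) → V → ℝ := fun a v =>
    if h : 0 < f v then a (Sum.inl ((G.induce P).connectedComponentMk ⟨v, h⟩))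
    else if h2 : f v < 0 then a (Sum.inr ((G.induce N).connectedComponentMk ⟨v, h2⟩))
    else 0 with hρ
  -- the linear map from coefficients to functions
  set L : (I → ℝ) →ₗ[ℝ] (V → ℝ) :=
    { toFun := fun a v => ρ a v * f v
      map_add' := by
        intro a b
        funext v
        by_cases h : 0 < f v
        · simp [hρ, h]; ring
        · by_cases h2 : f v < 0 <;> simp [hρ, h, h2] <;> ring
      map_smul' := by
        intro c a
        funext v
        by_cases h : 0 < f v
        · simp [hρ, h]; ring
        · by_cases h2 : f v < 0 <;> simp [hρ, h, h2] <;> ring } with hL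
  have hLapply : ∀ a v, L a v = ρ a v * f v := fun a v => rfl
  -- ρ at a representative of a positive component
  have hρpos : ∀ (a : I → ℝ) (v : V) (h : 0 < f v),
      ρ a v = a (Sum.inl ((G.induce P).connectedComponentMk ⟨v, h⟩)) := by
    intro a v h; simp [hρ, h]
  have hρneg : ∀ (a : I → ℝ) (v : V) (h : f v < 0),
      ρ a v = a (Sum.inr ((G.induce N).connectedComponentMk ⟨v, h⟩)) := by
    intro a v h
    have h' : ¬ 0 < f v := by linarith
    simp [hρ, h', h]
  -- injectivity of L
  have hLinj : Function.Injective L := by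
    rw [← LinearMap.ker_eq_bot]
    rw [LinearMap.ker_eq_bot']
    intro a ha
    funext c
    rcases c with c | c
    · obtain ⟨x, hx⟩ := c.exists_rep
      have hfx : 0 < f x.1 := x.2
      have := congrFun ha x.1
      rw [hLapply, hρpos a x.1 hfx] at this
      rw [show (G.induce P).connectedComponentMk ⟨x.1, hfx⟩ = c from hx] at this
      simp at this
      rcases this with h | h
      · exact h
      · exact absurd h (ne_of_gt hfx)
    · obtain ⟨x, hx⟩ := c.exists_rep
      have hfx : f x.1 < 0 := x.2
      have := congrFun ha x.1
      rw [hLapply, hρneg a x.1 hfx] at this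
      rw [show (G.induce N).connectedComponentMk ⟨x.1, hfx⟩ = c from hx] at this
      simp at this
      rcases this with h | h
      · exact h
      · exact absurd h (ne_of_lt hfx)
  -- same-sign adjacent vertices have equal ρ
  have hρadj : ∀ (a : I → ℝ) (u v : V), G.Adj u v → 0 < f u * f v → ρ a u = ρ a v := by
    intro a u v hadj hsame
    rcases mul_pos_iff.mp hsame with ⟨hu, hv⟩ | ⟨hu, hv⟩
    · rw [hρpos a u hu, hρpos a v hv]
      congr 1
      apply congrArg
      apply SimpleGraph.ConnectedComponent.sound
      exact SimpleGraph.Adj.reachable (by simp [hadj])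
    · rw [hρneg a u hu, hρneg a v hv]
      congr 1
      apply congrArg
      apply SimpleGraph.ConnectedComponent.sound
      exact SimpleGraph.Adj.reachable (by simp [hadj])
  -- the key Rayleigh quotient inequality on the span of sign-graph restrictions
  have hmv : ∀ (x : V → ℝ) (u : V), (A.mulVec x) u = ∑ v, A u v * x v := by
    intro x u
    simp [Matrix.mulVec, dotProduct]
  have hlam : ∀ u, lam * f u = ∑ v, A u v * f v := by
    intro u
    have h := congrFun hf u
    rw [hmv] at h
    simpa using h.symm
  have key : ∀ a : I → ℝ,
      (∑ u, L a u * (A.mulVec (L a)) u) ≤ lam * ∑ u, L a u * L a u := by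
    intro a
    have hterm : ∀ u v : V, 0 ≤ A u v * f u * f v * (ρ a u - ρ a v)^2 := by
      intro u v
      by_cases huv : u = v
      · subst huv; simp
      by_cases hadj : G.Adj u v
      · by_cases hsgn : 0 < f u * f v
        · rw [hρadj a u v hadj hsgn]
          simp
        · have h1 : f u * f v ≤ 0 := not_lt.mp hsgn
          have h2 : A u v < 0 := (hA.2 u v huv).1 hadj
          have h3 : 0 ≤ A u v * (f u * f v) := by nlinarith
          calc (0:ℝ) ≤ (A u v * (f u * f v)) * (ρ a u - ρ a v)^2 :=
                mul_nonneg h3 (sq_nonneg _)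
          _ = A u v * f u * f v * (ρ a u - ρ a v)^2 := by ring
      · rw [(hA.2 u v huv).2 hadj]
        simp
    set T : ℝ := ∑ u, ∑ v, A u v * f u * f v * (ρ a u * (ρ a u - ρ a v)) with hT
    have e1 : (∑ u, L a u * (A.mulVec (L a)) u)
        = ∑ u, ∑ v, A u v * f u * f v * (ρ a u * ρ a v) := by
      apply Finset.sum_congr rfl
      intro u _
      rw [hmv, hLapply, Finset.mul_sum]
      apply Finset.sum_congr rfl
      intro v _
      rw [hLapply]
      ring
    have e2 : lam * (∑ u, L a u * L a u)
        = ∑ u, ∑ v, A u v * f u * f v * (ρ a u * ρ a u) := by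
      rw [Finset.mul_sum]
      apply Finset.sum_congr rfl
      intro u _
      have h1 : lam * (L a u * L a u) = (ρ a u * ρ a u * f u) * (lam * f u) := by
        rw [hLapply]; ring
      rw [h1, hlam u, Finset.mul_sum]
      apply Finset.sum_congr rfl
      intro v _
      ring
    have e3 : lam * (∑ u, L a u * L a u) - (∑ u, L a u * (A.mulVec (L a)) u) = T := by
      rw [e1, e2, hT, ← Finset.sum_sub_distrib]
      apply Finset.sum_congr rfl
      intro u _
      rw [← Finset.sum_sub_distrib]
      apply Finset.sum_congr rfl
      intro v _
      ring
    have e4 : T = ∑ u, ∑ v, A u v * f u * f v * (ρ a v * (ρ a v - ρ a u)) := by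
      rw [hT, Finset.sum_comm]
      apply Finset.sum_congr rfl
      intro v _
      apply Finset.sum_congr rfl
      intro u _
      rw [hsym v u]
      ring
    have e5 : T + T = ∑ u, ∑ v, A u v * f u * f v * (ρ a u - ρ a v)^2 := by
      nth_rewrite 2 [e4]
      rw [hT, ← Finset.sum_add_distrib]
      apply Finset.sum_congr rfl
      intro u _
      rw [← Finset.sum_add_distrib]
      apply Finset.sum_congr rfl
      intro v _
      ring
    have e6 : 0 ≤ T + T := by
      rw [e5]
      apply Finset.sum_nonneg
      intro u _
      apply Finset.sum_nonneg
      intro v _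
      exact hterm u v
    have e7 : 0 ≤ T := by linarith
    linarith [e3]
  -- dimension counting: find a nonzero element orthogonal to low eigenvectors
  have hScard : Fintype.card {i : V // ev i ≤ lam} = K := by
    rw [Fintype.card_subtype, hcount]
  set D : (V → ℝ) →ₗ[ℝ] ({i : V // ev i ≤ lam} → ℝ) :=
    { toFun := fun g s => ∑ u, w s.1 u * g u
      map_add' := by
        intro g1 g2; funext s; simp [mul_add, Finset.sum_add_distrib]
      map_smul' := by
        intro c g; funext s; simp [Finset.mul_sum]; apply Finset.sum_congr rfl; intros; ring } with hD
  have hnotinj : ¬ Function.Injective (D ∘ₗ L) := by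
    intro hinj
    have h1 := LinearMap.finrank_le_finrank_of_injective hinj
    rw [Module.finrank_fintype_fun_eq_card, Module.finrank_fintype_fun_eq_card,
      hScard, hcardI] at h1
    omega
  obtain ⟨a, ha0, haker⟩ : ∃ a : I → ℝ, a ≠ 0 ∧ D (L a) = 0 := by
    rw [← LinearMap.ker_eq_bot] at hnotinj
    obtain ⟨a, hamem, ha0⟩ := Submodule.exists_mem_ne_zero_of_ne_bot hnotinj
    exact ⟨a, ha0, hamem⟩
  set g : V → ℝ := L a with hg
  have hg0 : g ≠ 0 := by
    intro h
    apply ha0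
    apply hLinj
    rw [map_zero]
    exact h
  have horth : ∀ i : V, ev i ≤ lam → (∑ u, w i u * g u) = 0 := by
    intro i hi
    have := congrFun haker ⟨i, hi⟩
    simpa [hD] using this
  -- expansion of g in the eigenbasis
  set c : V → ℝ := fun i => ∑ u, w i u * g u with hc
  have hexp : ∀ u, g u = ∑ i, c i * w i u := by
    set B : Module.Basis V ℝ (V → ℝ) :=
      (hh.eigenvectorBasis.toBasis).map (WithLp.linearEquiv 2 ℝ (V → ℝ)) with hB
    have hBw : ∀ i, B i = w i := by
      intro i
      simp [hB, Module.Basis.map_apply]; rfl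
    set y : V → ℝ := fun u => g u - ∑ i, c i * w i u with hy
    have hdoty : ∀ j, (∑ u, w j u * y u) = 0 := by
      intro j
      have h1 : (∑ u, w j u * y u)
          = (∑ u, w j u * g u) - ∑ u, w j u * (∑ i, c i * w i u) := by
        rw [← Finset.sum_sub_distrib]
        apply Finset.sum_congr rfl
        intro u _
        rw [hy]
        ring
      have h2 : (∑ u, w j u * (∑ i, c i * w i u))
          = ∑ i, c i * (∑ u, w j u * w i u) := by
        have h3 : ∀ u, w j u * (∑ i, c i * w i u) = ∑ i, c i * (w j u * w i u) := by
          intro u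
          rw [Finset.mul_sum]
          apply Finset.sum_congr rfl
          intro i _
          ring
        simp_rw [h3]
        rw [Finset.sum_comm]
        apply Finset.sum_congr rfl
        intro i _
        rw [Finset.mul_sum]
      rw [h1, h2]
      simp_rw [horm]
      simp [mul_ite, hc]
    have hyrep : ∀ u, y u = ∑ i, B.repr y i * w i u := by
      intro u
      have h1 := congrFun (B.sum_repr y) u
      rw [Finset.sum_apply] at h1
      rw [← h1]
      apply Finset.sum_congr rfl
      intro i _
      rw [Pi.smul_apply, smul_eq_mul, hBw]
    have hdot : (∑ u, y u * y u) = 0 := by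
      have h1 : ∀ u, y u * y u = ∑ i, B.repr y i * (w i u * y u) := by
        intro u
        nth_rewrite 1 [hyrep u]
        rw [Finset.sum_mul]
        apply Finset.sum_congr rfl
        intro i _
        ring
      simp_rw [h1]
      rw [Finset.sum_comm]
      have h2 : ∀ i, (∑ u, B.repr y i * (w i u * y u)) = B.repr y i * ∑ u, w i u * y u := by
        intro i
        rw [Finset.mul_sum]
      simp_rw [h2, hdoty]
      simp
    have hy0 : ∀ u, y u = 0 := by
      intro u
      have h1 := (Finset.sum_eq_zero_iff_of_nonneg
        (fun u _ => mul_self_nonneg (y u))).mp hdot u (Finset.mem_univ u)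
      exact mul_self_eq_zero.mp h1
    intro u
    have h9 : g u - ∑ i, c i * w i u = 0 := hy0 u
    linarith
  -- final contradiction
  have hczero : ∀ i, ev i ≤ lam → c i = 0 := fun i hi => horth i hi
  have hcnz : ∃ i, c i ≠ 0 := by
    by_contra hall
    push_neg at hall
    apply hg0
    funext u
    rw [hexp u]
    simp [hall]
  have hAg : ∀ u, (A.mulVec g) u = ∑ i, (c i * ev i) * w i u := by
    intro u
    rw [hmv]
    have h1 : ∀ v, A u v * g v = ∑ i, c i * (A u v * w i v) := by
      intro v
      rw [hexp v, Finset.mul_sum]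
      apply Finset.sum_congr rfl
      intro i _
      ring
    simp_rw [h1]
    rw [Finset.sum_comm]
    apply Finset.sum_congr rfl
    intro i _
    rw [← Finset.mul_sum]
    have h2 : (∑ v, A u v * w i v) = ev i * w i u := by
      rw [← hmv (w i) u, hAw i]
      simp
    rw [h2]
    ring
  have hQ : (∑ u, g u * (A.mulVec g) u) = ∑ i, c i * (c i * ev i) := by
    have h1 : ∀ u, g u * (A.mulVec g) u
        = (∑ i, c i * w i u) * (∑ j, (c j * ev j) * w j u) := by
      intro u; rw [hexp u, hAg u]
    simp_rw [h1]
    exact dot_expand w horm c (fun j => c j * ev j)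
  have hGG : (∑ u, g u * g u) = ∑ i, c i * c i := by
    have h1 : ∀ u, g u * g u = (∑ i, c i * w i u) * (∑ j, c j * w j u) := by
      intro u; rw [hexp u]
    simp_rw [h1]
    exact dot_expand w horm c c
  have hgt : lam * ∑ u, g u * g u < ∑ u, g u * (A.mulVec g) u := by
    rw [hQ, hGG, Finset.mul_sum]
    apply Finset.sum_lt_sum
    · intro i _
      by_cases hi : ev i ≤ lam
      · rw [hczero i hi]; ring_nf; exact le_refl _
      · push_neg at hi
        have h2 : c i * c i * lam ≤ c i * c i * ev i :=
          mul_le_mul_of_nonneg_left hi.le (mul_self_nonneg _)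
        calc lam * (c i * c i) = c i * c i * lam := by ring
        _ ≤ c i * c i * ev i := h2
        _ = c i * (c i * ev i) := by ring
    · obtain ⟨i, hi⟩ := hcnz
      refine ⟨i, Finset.mem_univ i, ?_⟩
      have hevi : lam < ev i := by
        by_contra hle
        push_neg at hle
        exact hi (hczero i hle)
      have hsq : 0 < c i * c i := mul_self_pos.mpr hi
      calc lam * (c i * c i) < ev i * (c i * c i) := by
            exact mul_lt_mul_of_pos_right hevi hsq
      _ = c i * (c i * ev i) := by ring
  exact absurd (key a) (not_le.mpr hgt)
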